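/- Let S be a d-symbol, ℓ ≥ 1, and let S_{*ℓ} = s_{dℓ}(s_d^{-1}(S)) be the associated dℓ-symbol. Let δ = (c_0,…,c_{d−1}; m) be a d-hook data tuple and define the dℓ-hook data tuple δ_{*ℓ} = (c'_0,…,c'_{dℓ−1}; mℓ) by c'_{sd+i} = sm + c_i for s ∈ {0,…,ℓ−1} and i ∈ {0,…,d−1}. Then the multisets of generalized hook lengths agree: 𝓗^δ(S) = 𝓗^{δ_{*ℓ}}(S_{*ℓ}). -/
import Mathlib


/-- `X^{+s} = (X + s) ∪ {0,…,s−1}` for a β-set `X`. -/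
def shiftUp (X : Finset ℕ) (s : ℕ) : Finset ℕ :=
  X.image (· + s) ∪ Finset.range s

/-- The `d`-symbol `s_d(X)` associated to a β-set `X`:
`X_i^{(d)} = {k ∈ ℕ : i + k*d ∈ X}`. -/
def sd (d : ℕ) (X : Finset ℕ) : Fin d → Finset ℕ :=
  fun i => (X.filter fun a => a % d = (i : ℕ)).image fun a => a / d

/-- The inverse of `s_d`, recovering the β-set of a `d`-symbol. -/
def sdInv (d : ℕ) (S : Fin d → Finset ℕ) : Finset ℕ :=
  Finset.univ.biUnion fun i => (S i).image fun k => (i : ℕ) + k * d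

/-- Hooks of a β-set `X`: pairs `(a,b)` with `a > b`, `a ∈ X`, `b ∉ X`. -/
def betaHooks (X : Finset ℕ) : Finset (ℕ × ℕ) :=
  (X ×ˢ Finset.range (X.sup id + 1)).filter fun p => p.2 < p.1 ∧ p.2 ∉ X

/-- Hooks of a `d`-symbol `S`: quadruples `(a,b,i,j)` with `a ∈ S i`, `b ∉ S j`,
and either `a > b`, or `a = b` and `i > j`. -/
def symbolHooks {d : ℕ} (S : Fin d → Finset ℕ) : Finset (ℕ × ℕ × Fin d × Fin d) :=
  (Finset.range ((Finset.univ.sup fun i => (S i).sup id) + 1) ×ˢ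
      Finset.range ((Finset.univ.sup fun i => (S i).sup id) + 1) ×ˢ
      (Finset.univ : Finset (Fin d)) ×ˢ (Finset.univ : Finset (Fin d))).filter
    fun z => z.1 ∈ S z.2.2.1 ∧ z.2.1 ∉ S z.2.2.2 ∧
      (z.2.1 < z.1 ∨ (z.1 = z.2.1 ∧ z.2.2.2 < z.2.2.1))

/-- The partition `p(X)` of a β-set `X = {a_1 > … > a_t}`, as the multiset of the
nonzero numbers among `a_i − (t−i)`; the element `a` contributes the part
`a − #{b ∈ X : b < a}`. -/
def partitionOf (X : Finset ℕ) : Multiset ℕ :=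
  Multiset.filter (· ≠ 0) (X.val.map fun a => a - (X.filter (· < a)).card)

/-- `r`, the maximal number of parts among the partitions `p(X_i)` of a `d`-symbol. -/
def quotCard {d : ℕ} (S : Fin d → Finset ℕ) : ℕ :=
  Finset.univ.sup fun i => Multiset.card (partitionOf (S i))

/-- `Y` is the balanced quotient `Q(S)` of `S`: each `Y i` is the (unique) β-set of
cardinality `r` with `p(Y i) = p(S i)`, where `r` is the maximal number of parts
among the `p(S i)`. -/
def IsBalancedQuotient {d : ℕ} (S Y : Fin d → Finset ℕ) : Prop :=
  ∀ i, (Y i).card = quotCard S ∧ partitionOf (Y i) = partitionOf (S i)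

/-- The core `C(S) = ([x_0],…,[x_{d−1}])` of a `d`-symbol, `x_i = |X_i|`. -/
def coreSymbol {d : ℕ} (S : Fin d → Finset ℕ) : Fin d → Finset ℕ :=
  fun i => Finset.range (S i).card

/-- The `δ`-length `k(a−b) + c_i − c_j` of a hook `(a,b,i,j)`, for the
`d`-hook data tuple `δ = (c_0,…,c_{d−1};k)`. -/
noncomputable def hookLen {d : ℕ} (c : Fin d → ℝ) (k : ℝ)
    (z : ℕ × ℕ × Fin d × Fin d) : ℝ :=
  k * ((z.1 - z.2.1 : ℕ) : ℝ) + c z.2.2.1 - c z.2.2.2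

/-- The multiset `𝓗^δ(S)` of `δ`-lengths of all hooks of `S`. -/
noncomputable def hookLens {d : ℕ} (c : Fin d → ℝ) (k : ℝ)
    (S : Fin d → Finset ℕ) : Multiset ℝ :=
  (symbolHooks S).val.map (hookLen c k)

/-- `H_{ij}^ℓ(S)`, the set of hooks `(a,b,i,j)` of `S` with `a − b = ℓ`. -/
def Hij {d : ℕ} (S : Fin d → Finset ℕ) (i j : Fin d) (ℓ : ℕ) :
    Finset (ℕ × ℕ × Fin d × Fin d) :=
  (symbolHooks S).filter fun z => z.2.2.1 = i ∧ z.2.2.2 = j ∧ z.1 - z.2.1 = ℓ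

/-- The sign-modified length `h̄^{δ_S}` (on hooks of the balanced quotient), where
`x` records the cardinalities `x_i = |X_i|` of `S`, and `δ_S = (c_i + x_i k; k)`.
For a hook `z = (a,b,u,v)` with `ℓ = a − b`: relabelling so that `Δ = x_i − x_j ≥ 0`,
the sign is `+` if `z` lies in position `(i,j)`, or in position `(j,i)` with `ℓ > Δ`,
or in position `(j,i)` with `ℓ = Δ` and `i < j`; otherwise the sign is `−`. -/
noncomputable def signedLen {d : ℕ} (x : Fin d → ℕ) (c : Fin d → ℝ) (k : ℝ)
    (z : ℕ × ℕ × Fin d × Fin d) : ℝ :=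
  if x z.2.2.2 ≤ x z.2.2.1 then
    k * ((z.1 - z.2.1 : ℕ) : ℝ) + (c z.2.2.1 + (x z.2.2.1 : ℝ) * k)
      - (c z.2.2.2 + (x z.2.2.2 : ℝ) * k)
  else if x z.2.2.2 - x z.2.2.1 < z.1 - z.2.1 ∨
      (z.1 - z.2.1 = x z.2.2.2 - x z.2.2.1 ∧ (z.2.2.2 : ℕ) < (z.2.2.1 : ℕ)) then
    k * ((z.1 - z.2.1 : ℕ) : ℝ) + (c z.2.2.1 + (x z.2.2.1 : ℝ) * k)
      - (c z.2.2.2 + (x z.2.2.2 : ℝ) * k)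
  else
    -(k * ((z.1 - z.2.1 : ℕ) : ℝ) + (c z.2.2.1 + (x z.2.2.1 : ℝ) * k)
      - (c z.2.2.2 + (x z.2.2.2 : ℝ) * k))

/-- The permutation `σ_{d,ℓ,e}` of `ℕ`:
`σ(r(dℓ) + sd + t) = r(dℓ) + sd + ((t + re) mod d)`. -/
def twistFun (d ℓ e : ℕ) (n : ℕ) : ℕ :=
  d * ℓ * (n / (d * ℓ)) + d * (n % (d * ℓ) / d) + (n % d + n / (d * ℓ) * e) % d

lemma mem_betaHooks (X : Finset ℕ) (p : ℕ × ℕ) :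
    p ∈ betaHooks X ↔ p.1 ∈ X ∧ p.2 ∉ X ∧ p.2 < p.1 := by
  simp only [betaHooks, Finset.mem_filter, Finset.mem_product, Finset.mem_range]
  constructor
  · tauto
  · rintro ⟨h1, h2, h3⟩
    refine ⟨⟨h1, ?_⟩, h3, h2⟩
    have : p.1 ≤ X.sup id := Finset.le_sup (f := id) h1
    omega

lemma mem_symbolHooks {d : ℕ} (S : Fin d → Finset ℕ) (z : ℕ × ℕ × Fin d × Fin d) :
    z ∈ symbolHooks S ↔ z.1 ∈ S z.2.2.1 ∧ z.2.1 ∉ S z.2.2.2 ∧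
      (z.2.1 < z.1 ∨ (z.1 = z.2.1 ∧ z.2.2.2 < z.2.2.1)) := by
  simp only [symbolHooks, Finset.mem_filter, Finset.mem_product, Finset.mem_range,
    Finset.mem_univ, and_true, true_and]
  constructor
  · tauto
  · rintro ⟨h1, h2, h3⟩
    have ha : z.1 ≤ (S z.2.2.1).sup id := Finset.le_sup (f := id) h1
    have hb : (S z.2.2.1).sup id ≤ Finset.univ.sup fun i => (S i).sup id :=
      Finset.le_sup (f := fun i => (S i).sup id) (Finset.mem_univ z.2.2.1)
    refine ⟨⟨?_, ?_⟩, h1, h2, h3⟩ <;> omega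

lemma mem_sd {d : ℕ} (hd : 0 < d) (X : Finset ℕ) (i : Fin d) (k : ℕ) :
    k ∈ sd d X i ↔ k * d + (i : ℕ) ∈ X := by
  simp only [sd, Finset.mem_image, Finset.mem_filter]
  constructor
  · rintro ⟨A, ⟨hA, hmod⟩, hdiv⟩
    have hA' : A = k * d + (i : ℕ) := by
      rw [← hdiv, ← hmod, mul_comm]
      exact (Nat.div_add_mod A d).symm
    rwa [← hA']
  · intro h
    refine ⟨k * d + (i : ℕ), ⟨h, ?_⟩, ?_⟩
    · rw [mul_comm, Nat.mul_add_mod]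
      exact Nat.mod_eq_of_lt i.isLt
    · rw [mul_comm, Nat.mul_add_div hd, Nat.div_eq_of_lt i.isLt, Nat.add_zero]

lemma sd_sdInv {d : ℕ} (hd : 0 < d) (S : Fin d → Finset ℕ) :
    sd d (sdInv d S) = S := by
  funext i
  ext k
  rw [mem_sd hd]
  simp only [sdInv, Finset.mem_biUnion, Finset.mem_univ, Finset.mem_image, true_and]
  constructor
  · rintro ⟨i', a, ha, heq⟩
    have h1 : ((i' : ℕ) + a * d) % d = (i' : ℕ) := by
      simp [Nat.add_mul_mod_self_right, Nat.mod_eq_of_lt i'.isLt]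
    have h2 : (k * d + (i : ℕ)) % d = (i : ℕ) := by
      simp [Nat.add_mod, Nat.mul_mod_left, Nat.mod_eq_of_lt i.isLt]
    have hii : (i' : ℕ) = (i : ℕ) := by rw [← h1, heq, h2]
    have hmul : a * d = k * d := by omega
    have hak : a = k := Nat.eq_of_mul_eq_mul_right hd hmul
    have hif : i' = i := Fin.ext hii
    subst hif; subst hak; exact ha
  · intro h
    exact ⟨i, k, h, by ring⟩

lemma lex_iff {d i j a b : ℕ} (hi : i < d) (hj : j < d) :
    b * d + j < a * d + i ↔ b < a ∨ (a = b ∧ j < i) := by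
  constructor
  · intro h
    rcases Nat.lt_trichotomy a b with h1 | h1 | h1
    · have h2 : (a + 1) * d ≤ b * d := Nat.mul_le_mul_right d h1
      have : a * d + d ≤ b * d := by nlinarith
      omega
    · subst h1; right; omega
    · left; exact h1
  · rintro (h | ⟨h, hji⟩)
    · have h2 : (b + 1) * d ≤ a * d := Nat.mul_le_mul_right d h
      have : b * d + d ≤ a * d := by nlinarith
      omega
    · subst h; omega

lemma symbolHooks_sd {d : ℕ} (hd : 0 < d) (X : Finset ℕ) :
    symbolHooks (sd d X) = (betaHooks X).image
      (fun p => (p.1 / d, p.2 / d, (⟨p.1 % d, Nat.mod_lt _ hd⟩ : Fin d),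
        (⟨p.2 % d, Nat.mod_lt _ hd⟩ : Fin d))) := by
  ext z
  obtain ⟨a, b, i, j⟩ := z
  simp only [Finset.mem_image, mem_symbolHooks, mem_betaHooks, mem_sd hd, Prod.mk.injEq]
  constructor
  · rintro ⟨h1, h2, h3⟩
    refine ⟨(a * d + (i : ℕ), b * d + (j : ℕ)), ⟨h1, h2, ?_⟩, ?_⟩
    · rw [lex_iff i.isLt j.isLt]
      rcases h3 with h | ⟨h, h'⟩
      · left; exact h
      · right; exact ⟨h, h'⟩
    · have e1 : (a * d + (i : ℕ)) / d = a := by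
        rw [mul_comm, Nat.mul_add_div hd, Nat.div_eq_of_lt i.isLt, Nat.add_zero]
      have e2 : (a * d + (i : ℕ)) % d = (i : ℕ) := by
        rw [mul_comm, Nat.mul_add_mod]
        exact Nat.mod_eq_of_lt i.isLt
      have e3 : (b * d + (j : ℕ)) / d = b := by
        rw [mul_comm, Nat.mul_add_div hd, Nat.div_eq_of_lt j.isLt, Nat.add_zero]
      have e4 : (b * d + (j : ℕ)) % d = (j : ℕ) := by
        rw [mul_comm, Nat.mul_add_mod]
        exact Nat.mod_eq_of_lt j.isLt
      simp [e1, e2, e3, e4]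
  · rintro ⟨⟨A, B⟩, ⟨hA, hB, hAB⟩, heq⟩
    simp only [Prod.mk.injEq] at heq
    obtain ⟨ha, hb, hi, hj⟩ := heq
    have hi' : A % d = (i : ℕ) := congrArg Fin.val hi
    have hj' : B % d = (j : ℕ) := congrArg Fin.val hj
    have eA : A = a * d + (i : ℕ) := by
      rw [← ha, ← hi', mul_comm]
      exact (Nat.div_add_mod A d).symm
    have eB : B = b * d + (j : ℕ) := by
      rw [← hb, ← hj', mul_comm]
      exact (Nat.div_add_mod B d).symm
    rw [eA] at hA; rw [eB] at hB
    refine ⟨hA, hB, ?_⟩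
    rw [eA, eB, lex_iff i.isLt j.isLt] at hAB
    rcases hAB with h | ⟨h, h'⟩
    · left; exact h
    · right; exact ⟨h, h'⟩

lemma psi_injective {d : ℕ} (hd : 0 < d) :
    Function.Injective (fun p : ℕ × ℕ => (p.1 / d, p.2 / d,
      (⟨p.1 % d, Nat.mod_lt _ hd⟩ : Fin d), (⟨p.2 % d, Nat.mod_lt _ hd⟩ : Fin d))) := by
  rintro ⟨A, B⟩ ⟨A', B'⟩ h
  simp only [Prod.mk.injEq, Fin.mk.injEq] at h
  obtain ⟨h1, h2, h3, h4⟩ := h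
  have eA : A = A' := by
    conv_lhs => rw [← Nat.div_add_mod A d]
    rw [h1, h3, Nat.div_add_mod]
  have eB : B = B' := by
    conv_lhs => rw [← Nat.div_add_mod B d]
    rw [h2, h4, Nat.div_add_mod]
  simp only [Prod.mk.injEq]
  exact ⟨eA, eB⟩

lemma hookLens_sd {d : ℕ} (hd : 0 < d) (X : Finset ℕ) (c : Fin d → ℝ) (k : ℝ) :
    hookLens c k (sd d X) = (betaHooks X).val.map
      (fun p => (k * ((p.1 / d : ℕ) : ℝ) + c ⟨p.1 % d, Nat.mod_lt _ hd⟩)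
        - (k * ((p.2 / d : ℕ) : ℝ) + c ⟨p.2 % d, Nat.mod_lt _ hd⟩)) := by
  unfold hookLens
  rw [symbolHooks_sd hd, Finset.image_val,
    Multiset.dedup_eq_self.mpr ((betaHooks X).nodup.map (psi_injective hd)),
    Multiset.map_map]
  apply Multiset.map_congr rfl
  intro p hp
  obtain ⟨A, B⟩ := p
  have hmem : (A, B) ∈ betaHooks X := hp
  rw [mem_betaHooks] at hmem
  have hBA : B / d ≤ A / d := Nat.div_le_div_right (le_of_lt hmem.2.2)
  simp only [Function.comp_apply, hookLen]
  rw [Nat.cast_sub hBA]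
  ring

/-- `𝓗^δ(S) = 𝓗^{δ_{*ℓ}}(S_{*ℓ})`: the multisets of generalized hook lengths of a
`d`-symbol `S` (w.r.t. `δ = (c_0,…,c_{d−1}; m)`) and of the associated `dℓ`-symbol
`S_{*ℓ} = s_{dℓ}(s_d⁻¹(S))` (w.r.t. `δ_{*ℓ}`, with entry `sm + c_i` in position
`sd + i` and multiplier `mℓ`) agree. -/
theorem hookLens_star_eq (d : ℕ) (hd : 0 < d) (ℓ : ℕ) (hℓ : 0 < ℓ)
    (S : Fin d → Finset ℕ) (c : Fin d → ℝ) (m : ℝ) (hm : 0 ≤ m) :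
    hookLens c m S =
      hookLens
        (fun i' : Fin (d * ℓ) =>
          (((i' : ℕ) / d : ℕ) : ℝ) * m + c ⟨(i' : ℕ) % d, Nat.mod_lt _ hd⟩)
        (m * (ℓ : ℝ)) (sd (d * ℓ) (sdInv d S)) := by
  have hdl : 0 < d * ℓ := Nat.mul_pos hd hℓ
  set X := sdInv d S with hX
  conv_lhs => rw [← sd_sdInv hd S]
  rw [hookLens_sd hd X c m, hookLens_sd hdl X _ (m * (ℓ : ℝ))]
  apply Multiset.map_congr rfl
  intro p _
  have key : ∀ n : ℕ,
      m * ((n / d : ℕ) : ℝ) + c ⟨n % d, Nat.mod_lt _ hd⟩ =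
      m * (ℓ : ℝ) * ((n / (d * ℓ) : ℕ) : ℝ) +
        ((((n % (d * ℓ)) / d : ℕ) : ℝ) * m +
          c ⟨(n % (d * ℓ)) % d, Nat.mod_lt _ hd⟩) := by
    intro n
    have hmod : (n % (d * ℓ)) % d = n % d :=
      Nat.mod_mod_of_dvd n ⟨ℓ, rfl⟩
    have hdiv : n / d = n % (d * ℓ) / d + ℓ * (n / (d * ℓ)) := by
      conv_lhs => rw [← Nat.mod_add_div n (d * ℓ), mul_assoc]
      rw [Nat.add_mul_div_left _ _ hd]
    have hc : c ⟨(n % (d * ℓ)) % d, Nat.mod_lt _ hd⟩ =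
        c ⟨n % d, Nat.mod_lt _ hd⟩ := by
      congr 1
      exact Fin.ext hmod
    rw [hc, hdiv]
    push_cast
    ring
  rw [key p.1, key p.2]
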